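/- Let R_ℓ be the free unital associative 𝔽-algebra on x₁,…,x_ℓ with partial derivatives ∂/∂x_i. Let A = (A_{ij})_{i,j=1}^{ℓ} be a family with A_{ij} ∈ R_ℓ⊗R_ℓ satisfying A_{ij} = −(A_{ji})^σ for all i,j. Then the closedness condition (∂/∂x_i)_L A_{jk} − (∂/∂x_j)_R A_{ik} + ((∂/∂x_k)_L A_{ij})^{σ²} = 0 in R_ℓ^{⊗3} for all i,j,k holds if and only if there exists F = (F₁,…,F_ℓ) ∈ (R_ℓ)^ℓ such that A_{ij} = (1/2)(∂F_j/∂x_i − (∂F_i/∂x_j)^σ) for all i,j. -/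

import Mathlib

open TensorProduct LinearMap

section DPA

variable (𝔽 : Type) [Field 𝔽] (V : Type) [Ring V] [Algebra 𝔽 V]

/-- The swap `(u ⊗ v)^σ = v ⊗ u` on `V ⊗ V`. -/
noncomputable abbrev swap2 : V ⊗[𝔽] V ≃ₗ[𝔽] V ⊗[𝔽] V := TensorProduct.comm 𝔽 V V

/-- The cyclic permutation `(u ⊗ v ⊗ w)^σ = w ⊗ u ⊗ v` on `V ⊗ V ⊗ V = (V ⊗ V) ⊗ V`. -/
noncomputable def sigma3 : (V ⊗[𝔽] V) ⊗[𝔽] V ≃ₗ[𝔽] (V ⊗[𝔽] V) ⊗[𝔽] V :=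
  (TensorProduct.comm 𝔽 (V ⊗[𝔽] V) V).trans (TensorProduct.assoc 𝔽 V V V).symm

/-- Left multiplication `a · (u ⊗ v) = (a*u) ⊗ v` (outer bimodule structure). -/
noncomputable def lact2 (a : V) : V ⊗[𝔽] V →ₗ[𝔽] V ⊗[𝔽] V :=
  LinearMap.rTensor V (LinearMap.mulLeft 𝔽 a)

/-- Right multiplication `(u ⊗ v) · c = u ⊗ (v*c)` (outer bimodule structure). -/
noncomputable def ract2 (c : V) : V ⊗[𝔽] V →ₗ[𝔽] V ⊗[𝔽] V :=
  LinearMap.lTensor V (LinearMap.mulRight 𝔽 c)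

/-- `(u ⊗ v) ⋆₁ b = (u*b) ⊗ v`. -/
noncomputable def star1r (b : V) : V ⊗[𝔽] V →ₗ[𝔽] V ⊗[𝔽] V :=
  LinearMap.rTensor V (LinearMap.mulRight 𝔽 b)

/-- `a ⋆₁ (u ⊗ v) = u ⊗ (a*v)`. -/
noncomputable def star1l (a : V) : V ⊗[𝔽] V →ₗ[𝔽] V ⊗[𝔽] V :=
  LinearMap.lTensor V (LinearMap.mulLeft 𝔽 a)

/-- The `•`-product on `V ⊗ V`:  `(u ⊗ v) • (x ⊗ y) = (u*x) ⊗ (y*v)`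
(the multiplication of `V ⊗ Vᵒᵖ`). -/
noncomputable def bullet : V ⊗[𝔽] V →ₗ[𝔽] V ⊗[𝔽] V →ₗ[𝔽] V ⊗[𝔽] V :=
  TensorProduct.lift
    (((TensorProduct.mapBilinear (RingHom.id 𝔽) V V V V).comp (LinearMap.mul 𝔽 V)).compl₂
      ((LinearMap.mul 𝔽 V).flip))

/-- A `2`-fold bracket on `V`: an `𝔽`-bilinear map `V × V → V ⊗ V` satisfying the two
Leibniz rules `{{a,bc}} = {{a,b}}·c + b·{{a,c}}` and `{{ab,c}} = {{a,c}} ⋆₁ b + a ⋆₁ {{b,c}}`. -/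
def IsDoubleBracket (Br : V →ₗ[𝔽] V →ₗ[𝔽] V ⊗[𝔽] V) : Prop :=
  (∀ a b c : V, Br a (b * c) = ract2 𝔽 V c (Br a b) + lact2 𝔽 V b (Br a c)) ∧
  (∀ a b c : V, Br (a * b) c = star1r 𝔽 V b (Br a c) + star1l 𝔽 V a (Br b c))

variable {𝔽 V}

/-- `{{a, B}}_L` : apply the bracket to the first tensor factor. -/
noncomputable def brL (Br : V →ₗ[𝔽] V →ₗ[𝔽] V ⊗[𝔽] V) (a : V) :
    V ⊗[𝔽] V →ₗ[𝔽] (V ⊗[𝔽] V) ⊗[𝔽] V :=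
  LinearMap.rTensor V (Br a)

/-- `{{a, B}}_R` : apply the bracket to the second tensor factor. -/
noncomputable def brR (Br : V →ₗ[𝔽] V →ₗ[𝔽] V ⊗[𝔽] V) (a : V) :
    V ⊗[𝔽] V →ₗ[𝔽] (V ⊗[𝔽] V) ⊗[𝔽] V :=
  (TensorProduct.assoc 𝔽 V V V).symm.toLinearMap ∘ₗ LinearMap.lTensor V (Br a)

variable (𝔽 V)

/-- `ρ₂` : swap the last two tensor factors of `V ⊗ V ⊗ V`. -/
noncomputable def rho2 : (V ⊗[𝔽] V) ⊗[𝔽] V ≃ₗ[𝔽] (V ⊗[𝔽] V) ⊗[𝔽] V :=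
  (TensorProduct.assoc 𝔽 V V V).trans
    ((TensorProduct.congr (LinearEquiv.refl 𝔽 V) (TensorProduct.comm 𝔽 V V)).trans
      (TensorProduct.assoc 𝔽 V V V).symm)

variable {𝔽 V}

/-- Conjugated bullet action used to define the actions `•ᵢ` of `V ⊗ V` on `V ⊗ V ⊗ V`. -/
noncomputable def conjAct (β : V ⊗[𝔽] V →ₗ[𝔽] V ⊗[𝔽] V →ₗ[𝔽] V ⊗[𝔽] V)
    (ρ : (V ⊗[𝔽] V) ⊗[𝔽] V ≃ₗ[𝔽] (V ⊗[𝔽] V) ⊗[𝔽] V) :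
    V ⊗[𝔽] V →ₗ[𝔽] (V ⊗[𝔽] V) ⊗[𝔽] V →ₗ[𝔽] (V ⊗[𝔽] V) ⊗[𝔽] V :=
  (LinearMap.lcomp 𝔽 _ ρ.toLinearMap) ∘ₗ
    (LinearMap.llcomp 𝔽 ((V ⊗[𝔽] V) ⊗[𝔽] V) ((V ⊗[𝔽] V) ⊗[𝔽] V) ((V ⊗[𝔽] V) ⊗[𝔽] V)
      ρ.symm.toLinearMap) ∘ₗ
    (LinearMap.rTensorHom V) ∘ₗ β

variable (𝔽 V)

/-- The right action `X •₁ A`, i.e. `(x⊗y⊗z) •₁ (a⊗b) = x⊗(y*a)⊗(b*z)`;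
`bAct1R A X = X •₁ A`. -/
noncomputable def bAct1R : V ⊗[𝔽] V →ₗ[𝔽] (V ⊗[𝔽] V) ⊗[𝔽] V →ₗ[𝔽] (V ⊗[𝔽] V) ⊗[𝔽] V :=
  conjAct (bullet 𝔽 V).flip ((sigma3 𝔽 V).trans (sigma3 𝔽 V))

/-- The left action `A •₂ X`, i.e. `(a⊗b) •₂ (x⊗y⊗z) = (a*x)⊗y⊗(z*b)`. -/
noncomputable def bAct2L : V ⊗[𝔽] V →ₗ[𝔽] (V ⊗[𝔽] V) ⊗[𝔽] V →ₗ[𝔽] (V ⊗[𝔽] V) ⊗[𝔽] V :=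
  conjAct (bullet 𝔽 V) (rho2 𝔽 V)

/-- The right action `X •₃ A`, i.e. `(x⊗y⊗z) •₃ (a⊗b) = (x*a)⊗(b*y)⊗z`;
`bAct3R A X = X •₃ A`. -/
noncomputable def bAct3R : V ⊗[𝔽] V →ₗ[𝔽] (V ⊗[𝔽] V) ⊗[𝔽] V →ₗ[𝔽] (V ⊗[𝔽] V) ⊗[𝔽] V :=
  conjAct (bullet 𝔽 V).flip (LinearEquiv.refl 𝔽 ((V ⊗[𝔽] V) ⊗[𝔽] V))

/-- `a ⋆₁ (x⊗y⊗z) = x⊗(a*y)⊗z`. -/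
noncomputable def slot2L (a : V) : (V ⊗[𝔽] V) ⊗[𝔽] V →ₗ[𝔽] (V ⊗[𝔽] V) ⊗[𝔽] V :=
  LinearMap.rTensor V (LinearMap.lTensor V (LinearMap.mulLeft 𝔽 a))

/-- `(x⊗y⊗z) ⋆₁ b = x⊗(y*b)⊗z`. -/
noncomputable def slot2R (b : V) : (V ⊗[𝔽] V) ⊗[𝔽] V →ₗ[𝔽] (V ⊗[𝔽] V) ⊗[𝔽] V :=
  LinearMap.rTensor V (LinearMap.lTensor V (LinearMap.mulRight 𝔽 b))

/-- `a ⋆₂ (x⊗y⊗z) = x⊗y⊗(a*z)`. -/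
noncomputable def slot3L (a : V) : (V ⊗[𝔽] V) ⊗[𝔽] V →ₗ[𝔽] (V ⊗[𝔽] V) ⊗[𝔽] V :=
  LinearMap.lTensor (V ⊗[𝔽] V) (LinearMap.mulLeft 𝔽 a)

/-- `(x⊗y⊗z) ⋆₂ b = (x*b)⊗y⊗z`. -/
noncomputable def slot1R (b : V) : (V ⊗[𝔽] V) ⊗[𝔽] V →ₗ[𝔽] (V ⊗[𝔽] V) ⊗[𝔽] V :=
  LinearMap.rTensor V (LinearMap.rTensor V (LinearMap.mulRight 𝔽 b))

/-- outer left: `a · (x⊗y⊗z) = (a*x)⊗y⊗z`. -/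
noncomputable def slot1L (a : V) : (V ⊗[𝔽] V) ⊗[𝔽] V →ₗ[𝔽] (V ⊗[𝔽] V) ⊗[𝔽] V :=
  LinearMap.rTensor V (LinearMap.rTensor V (LinearMap.mulLeft 𝔽 a))

/-- outer right: `(x⊗y⊗z) · b = x⊗y⊗(z*b)`. -/
noncomputable def slot3R (b : V) : (V ⊗[𝔽] V) ⊗[𝔽] V →ₗ[𝔽] (V ⊗[𝔽] V) ⊗[𝔽] V :=
  LinearMap.lTensor (V ⊗[𝔽] V) (LinearMap.mulRight 𝔽 b)

variable {𝔽 V}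

/-- The triple bracket `{{a,b,c}}`. -/
noncomputable def triple (Br : V →ₗ[𝔽] V →ₗ[𝔽] V ⊗[𝔽] V) (a b c : V) :
    (V ⊗[𝔽] V) ⊗[𝔽] V :=
  brL Br a (Br b c) + sigma3 𝔽 V (brL Br b (Br c a)) +
    sigma3 𝔽 V (sigma3 𝔽 V (brL Br c (Br a b)))

variable (𝔽 V)

/-- Skewsymmetry of a 2-fold bracket. -/
def IsSkew (Br : V →ₗ[𝔽] V →ₗ[𝔽] V ⊗[𝔽] V) : Prop :=
  ∀ a b : V, Br a b = - swap2 𝔽 V (Br b a)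

/-- The span of commutators `[V,V]`. -/
def commSub : Submodule 𝔽 V := Submodule.span 𝔽 {x : V | ∃ a b : V, x = a * b - b * a}

variable {𝔽 V}

/-- The associated bracket `{a,b} = m {{a,b}}`. -/
noncomputable def sb (Br : V →ₗ[𝔽] V →ₗ[𝔽] V ⊗[𝔽] V) (a b : V) : V :=
  LinearMap.mul' 𝔽 V (Br a b)

/-- A 2-fold derivation: `D(ab) = (Da)·b + a·(Db)`. -/
def Is2Deriv (D : V →ₗ[𝔽] V ⊗[𝔽] V) : Prop :=
  ∀ a b : V, D (a * b) = ract2 𝔽 V b (D a) + lact2 𝔽 V a (D b)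

/-- `D` and `E` strongly commute: `D_L ∘ E = E_R ∘ D`. -/
def StronglyComm (D E : V →ₗ[𝔽] V ⊗[𝔽] V) : Prop :=
  ∀ f : V, LinearMap.rTensor V D (E f) =
    (TensorProduct.assoc 𝔽 V V V).symm (LinearMap.lTensor V E (D f))


section Aux18

set_option synthInstance.maxHeartbeats 1000000
set_option maxHeartbeats 1000000


variable {𝔽 : Type} [Field 𝔽] {V : Type} [Ring V] [Algebra 𝔽 V]

lemma st18_ract2_tmul (c u v : V) : ract2 𝔽 V c (u ⊗ₜ[𝔽] v) = u ⊗ₜ[𝔽] (v * c) := by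
  simp [ract2]

lemma st18_lact2_tmul (a u v : V) : lact2 𝔽 V a (u ⊗ₜ[𝔽] v) = (a * u) ⊗ₜ[𝔽] v := by
  simp [lact2]

lemma st18_sigma3_tmul (u v w : V) :
    sigma3 𝔽 V ((u ⊗ₜ[𝔽] v) ⊗ₜ[𝔽] w) = (w ⊗ₜ[𝔽] u) ⊗ₜ[𝔽] v := by
  simp [sigma3]

lemma st18_tau3 (t : (V ⊗[𝔽] V) ⊗[𝔽] V) : sigma3 𝔽 V (sigma3 𝔽 V (sigma3 𝔽 V t)) = t := by
  induction t with
  | zero => simp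
  | add a b ha hb => simp [map_add, ha, hb]
  | tmul x w =>
    induction x with
    | zero => simp
    | add a b ha hb => simp [add_tmul, map_add, ha, hb]
    | tmul u v => simp [st18_sigma3_tmul]

lemma st18_deriv_one {D : V →ₗ[𝔽] V ⊗[𝔽] V} (hD : Is2Deriv D) : D 1 = 0 := by
  have h := hD 1 1
  rw [mul_one] at h
  have h1 : ract2 𝔽 V 1 (D 1) = D 1 := by
    simp [ract2, LinearMap.mulRight_one]
  have h2 : lact2 𝔽 V 1 (D 1) = D 1 := by
    simp [lact2, LinearMap.mulLeft_one]
  rw [h1, h2] at h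
  have := add_eq_left.mp h.symm  -- h : D 1 = D 1 + D 1
  -- h : D 1 = D 1 + D 1 ⇒ D 1 = 0
  nth_rewrite 1 [← add_zero (D 1)] at h
  exact (add_left_cancel h).symm

lemma st18_deriv_algebraMap {D : V →ₗ[𝔽] V ⊗[𝔽] V} (hD : Is2Deriv D) (r : 𝔽) :
    D (algebraMap 𝔽 V r) = 0 := by
  rw [Algebra.algebraMap_eq_smul_one, map_smul, st18_deriv_one hD, smul_zero]

/-- abbreviation for the right-sided lift `D_R`. -/
noncomputable def st18_dR (D : V →ₗ[𝔽] V ⊗[𝔽] V) : V ⊗[𝔽] V →ₗ[𝔽] (V ⊗[𝔽] V) ⊗[𝔽] V :=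
  (TensorProduct.assoc 𝔽 V V V).symm.toLinearMap ∘ₗ LinearMap.lTensor V D

lemma st18_dR_apply (D : V →ₗ[𝔽] V ⊗[𝔽] V) (t : V ⊗[𝔽] V) :
    st18_dR D t = (TensorProduct.assoc 𝔽 V V V).symm (LinearMap.lTensor V D t) := rfl

lemma st18_aux1 (s : V ⊗[𝔽] V) (u : V) :
    sigma3 𝔽 V (sigma3 𝔽 V ((TensorProduct.assoc 𝔽 V V V).symm (u ⊗ₜ[𝔽] s))) = s ⊗ₜ[𝔽] u := by
  induction s with
  | zero =>
    rw [TensorProduct.tmul_zero, TensorProduct.zero_tmul, LinearEquiv.map_zero,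
      LinearEquiv.map_zero, LinearEquiv.map_zero]
  | add a b ha hb => simp only [TensorProduct.tmul_add, map_add, ha, hb, TensorProduct.add_tmul]
  | tmul p q => simp [st18_sigma3_tmul]

lemma st18_aux2 (s : V ⊗[𝔽] V) (v : V) :
    (TensorProduct.assoc 𝔽 V V V).symm (v ⊗ₜ[𝔽] s) = sigma3 𝔽 V (s ⊗ₜ[𝔽] v) := by
  induction s with
  | zero =>
    rw [TensorProduct.tmul_zero, TensorProduct.zero_tmul, LinearEquiv.map_zero,
      LinearEquiv.map_zero]
  | add a b ha hb => simp only [TensorProduct.tmul_add, map_add, ha, hb, TensorProduct.add_tmul]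
  | tmul p q => simp [st18_sigma3_tmul]

/-- `D_L ∘ σ = τ² ∘ D_R`. -/
lemma st18_S1 (D : V →ₗ[𝔽] V ⊗[𝔽] V) (t : V ⊗[𝔽] V) :
    LinearMap.rTensor V D (swap2 𝔽 V t) = sigma3 𝔽 V (sigma3 𝔽 V (st18_dR D t)) := by
  induction t with
  | zero => simp
  | add a b ha hb => simp [map_add, ha, hb]
  | tmul u v =>
    simp only [TensorProduct.comm_tmul, LinearMap.rTensor_tmul, st18_dR_apply,
      LinearMap.lTensor_tmul, st18_aux1]

/-- `D_R ∘ σ = τ ∘ D_L`. -/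
lemma st18_S2 (D : V →ₗ[𝔽] V ⊗[𝔽] V) (t : V ⊗[𝔽] V) :
    st18_dR D (swap2 𝔽 V t) = sigma3 𝔽 V (LinearMap.rTensor V D t) := by
  induction t with
  | zero => simp
  | add a b ha hb => simp [map_add, ha, hb]
  | tmul u v =>
    simp only [TensorProduct.comm_tmul, LinearMap.rTensor_tmul, st18_dR_apply,
      LinearMap.lTensor_tmul, st18_aux2]

end Aux18

section Aux18B

set_option synthInstance.maxHeartbeats 1000000
set_option maxHeartbeats 1000000


variable {𝔽 : Type} [Field 𝔽] {V : Type} [Ring V] [Algebra 𝔽 V]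

/-- `Φ (s ⊗ t) = (s₁ ⊗ (s₂ * t₁)) ⊗ t₂`. -/
noncomputable def st18_Phi : (V ⊗[𝔽] V) ⊗[𝔽] (V ⊗[𝔽] V) →ₗ[𝔽] (V ⊗[𝔽] V) ⊗[𝔽] V :=
  (TensorProduct.assoc 𝔽 V V V).symm.toLinearMap ∘ₗ
    LinearMap.lTensor V ((LinearMap.rTensor V (LinearMap.mul' 𝔽 V)) ∘ₗ
      (TensorProduct.assoc 𝔽 V V V).symm.toLinearMap) ∘ₗ
    (TensorProduct.assoc 𝔽 V V (V ⊗[𝔽] V)).toLinearMap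

lemma st18_Phi_tmul (s₁ s₂ t₁ t₂ : V) :
    st18_Phi ((s₁ ⊗ₜ[𝔽] s₂) ⊗ₜ[𝔽] (t₁ ⊗ₜ[𝔽] t₂)) = (s₁ ⊗ₜ[𝔽] (s₂ * t₁)) ⊗ₜ[𝔽] t₂ := by
  simp [st18_Phi]

lemma st18_Phi_ract (s : V ⊗[𝔽] V) (u v : V) :
    st18_Phi (s ⊗ₜ[𝔽] (u ⊗ₜ[𝔽] v)) = (ract2 𝔽 V u s) ⊗ₜ[𝔽] v := by
  induction s with
  | zero => rw [TensorProduct.zero_tmul, map_zero, map_zero, TensorProduct.zero_tmul]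
  | add a b ha hb => rw [TensorProduct.add_tmul, map_add, ha, hb, map_add,
      TensorProduct.add_tmul]
  | tmul p q => rw [st18_Phi_tmul, st18_ract2_tmul]

lemma st18_Phi_lact (s : V ⊗[𝔽] V) (u v : V) :
    (TensorProduct.assoc 𝔽 V V V).symm (u ⊗ₜ[𝔽] (lact2 𝔽 V v s)) =
      st18_Phi ((u ⊗ₜ[𝔽] v) ⊗ₜ[𝔽] s) := by
  induction s with
  | zero => rw [map_zero, TensorProduct.tmul_zero, LinearEquiv.map_zero,
      TensorProduct.tmul_zero, map_zero]
  | add a b ha hb => rw [map_add, TensorProduct.tmul_add, map_add, ha, hb,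
      TensorProduct.tmul_add, map_add]
  | tmul p q => rw [st18_lact2_tmul, st18_Phi_tmul, TensorProduct.assoc_symm_tmul]

lemma st18_slot1L_tmul (a : V) (s : V ⊗[𝔽] V) (v : V) :
    slot1L 𝔽 V a (s ⊗ₜ[𝔽] v) = (lact2 𝔽 V a s) ⊗ₜ[𝔽] v := by
  rw [slot1L, LinearMap.rTensor_tmul]; rfl

lemma st18_slot3R_tmul (b : V) (s : V ⊗[𝔽] V) (v : V) :
    slot3R 𝔽 V b (s ⊗ₜ[𝔽] v) = s ⊗ₜ[𝔽] (v * b) := by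
  rw [slot3R, LinearMap.lTensor_tmul, LinearMap.mulRight_apply]

lemma st18_slot1L_assoc (a u : V) (s : V ⊗[𝔽] V) :
    slot1L 𝔽 V a ((TensorProduct.assoc 𝔽 V V V).symm (u ⊗ₜ[𝔽] s)) =
      (TensorProduct.assoc 𝔽 V V V).symm ((a * u) ⊗ₜ[𝔽] s) := by
  induction s with
  | zero => simp only [TensorProduct.tmul_zero, LinearEquiv.map_zero, map_zero]
  | add p q hp hq => simp only [TensorProduct.tmul_add, map_add, hp, hq]
  | tmul p q => rw [TensorProduct.assoc_symm_tmul, TensorProduct.assoc_symm_tmul,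
      st18_slot1L_tmul, st18_lact2_tmul]

lemma st18_slot3R_assoc (b u : V) (s : V ⊗[𝔽] V) :
    slot3R 𝔽 V b ((TensorProduct.assoc 𝔽 V V V).symm (u ⊗ₜ[𝔽] s)) =
      (TensorProduct.assoc 𝔽 V V V).symm (u ⊗ₜ[𝔽] (ract2 𝔽 V b s)) := by
  induction s with
  | zero => simp only [TensorProduct.tmul_zero, LinearEquiv.map_zero, map_zero]
  | add p q hp hq => simp only [TensorProduct.tmul_add, map_add, hp, hq]
  | tmul p q => rw [TensorProduct.assoc_symm_tmul, st18_ract2_tmul,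
      TensorProduct.assoc_symm_tmul, st18_slot3R_tmul]

lemma st18_I1 (D : V →ₗ[𝔽] V ⊗[𝔽] V) (b : V) (t : V ⊗[𝔽] V) :
    LinearMap.rTensor V D (ract2 𝔽 V b t) = slot3R 𝔽 V b (LinearMap.rTensor V D t) := by
  induction t with
  | zero => simp
  | add a c ha hc => simp [map_add, ha, hc]
  | tmul u v => rw [st18_ract2_tmul]; simp [slot3R]

lemma st18_I2 {D : V →ₗ[𝔽] V ⊗[𝔽] V} (hD : Is2Deriv D) (a : V) (t : V ⊗[𝔽] V) :
    LinearMap.rTensor V D (lact2 𝔽 V a t) =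
      slot1L 𝔽 V a (LinearMap.rTensor V D t) + st18_Phi ((D a) ⊗ₜ[𝔽] t) := by
  induction t with
  | zero => simp
  | add u v hu hv =>
    simp only [map_add, TensorProduct.tmul_add, hu, hv]
    abel
  | tmul u v =>
    rw [st18_lact2_tmul, LinearMap.rTensor_tmul, LinearMap.rTensor_tmul, hD a u,
      TensorProduct.add_tmul, st18_slot1L_tmul, st18_Phi_ract]
    abel

lemma st18_I3 (D : V →ₗ[𝔽] V ⊗[𝔽] V) (a : V) (t : V ⊗[𝔽] V) :
    st18_dR D (lact2 𝔽 V a t) = slot1L 𝔽 V a (st18_dR D t) := by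
  induction t with
  | zero => simp
  | add u v hu hv => simp only [map_add, hu, hv]
  | tmul u v =>
    rw [st18_lact2_tmul, st18_dR_apply, st18_dR_apply, LinearMap.lTensor_tmul,
      LinearMap.lTensor_tmul, st18_slot1L_assoc]

lemma st18_I4 {D : V →ₗ[𝔽] V ⊗[𝔽] V} (hD : Is2Deriv D) (b : V) (t : V ⊗[𝔽] V) :
    st18_dR D (ract2 𝔽 V b t) =
      slot3R 𝔽 V b (st18_dR D t) + st18_Phi (t ⊗ₜ[𝔽] (D b)) := by
  induction t with
  | zero => simp
  | add u v hu hv =>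
    simp only [map_add, TensorProduct.add_tmul, hu, hv]
    abel
  | tmul u v =>
    rw [st18_ract2_tmul, st18_dR_apply, st18_dR_apply, LinearMap.lTensor_tmul,
      LinearMap.lTensor_tmul, hD v b, TensorProduct.tmul_add, map_add, st18_Phi_lact,
      st18_slot3R_assoc]

/-- Strong commutativity of the partial derivatives on the free algebra. -/
lemma st18_sc {ℓ : ℕ}
    (D : Fin ℓ → (FreeAlgebra 𝔽 (Fin ℓ) →ₗ[𝔽] FreeAlgebra 𝔽 (Fin ℓ) ⊗[𝔽] FreeAlgebra 𝔽 (Fin ℓ)))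
    (hD : ∀ i, Is2Deriv (D i))
    (hgen : ∀ i k, D i (FreeAlgebra.ι 𝔽 k) =
      if i = k then (1 : FreeAlgebra 𝔽 (Fin ℓ)) ⊗ₜ[𝔽] (1 : FreeAlgebra 𝔽 (Fin ℓ)) else 0)
    (i j : Fin ℓ) (f : FreeAlgebra 𝔽 (Fin ℓ)) :
    LinearMap.rTensor (FreeAlgebra 𝔽 (Fin ℓ)) (D i) (D j f) = st18_dR (D j) (D i f) := by
  induction f using FreeAlgebra.induction with
  | grade0 r => rw [st18_deriv_algebraMap (hD i) r, st18_deriv_algebraMap (hD j) r,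
      map_zero, map_zero]
  | grade1 k =>
    rw [hgen i k, hgen j k]
    have h1 : LinearMap.rTensor (FreeAlgebra 𝔽 (Fin ℓ)) (D i)
        ((1 : FreeAlgebra 𝔽 (Fin ℓ)) ⊗ₜ[𝔽] 1) = 0 := by
      rw [LinearMap.rTensor_tmul, st18_deriv_one (hD i), TensorProduct.zero_tmul]
    have h2 : st18_dR (D j) ((1 : FreeAlgebra 𝔽 (Fin ℓ)) ⊗ₜ[𝔽] 1) = 0 := by
      rw [st18_dR_apply, LinearMap.lTensor_tmul, st18_deriv_one (hD j),
        TensorProduct.tmul_zero, LinearEquiv.map_zero]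
    split_ifs <;> simp [h1, h2]
  | mul a b ha hb =>
    rw [hD j a b, hD i a b, map_add, map_add, st18_I1, st18_I2 (hD i), st18_I4 (hD j),
      st18_I3, ha, hb]
    abel
  | add a b ha hb => rw [map_add, map_add, map_add, map_add, ha, hb]

end Aux18B

section Aux18C

set_option synthInstance.maxHeartbeats 1000000
set_option maxHeartbeats 1000000

variable {𝔽 : Type} [Field 𝔽] {V : Type} [Ring V] [Algebra 𝔽 V]

/-- insertion `u ⊗ v ↦ u * (a * v)`. -/
noncomputable def st18_insm (a : V) : V ⊗[𝔽] V →ₗ[𝔽] V :=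
  LinearMap.mul' 𝔽 V ∘ₗ LinearMap.lTensor V (LinearMap.mulLeft 𝔽 a)

lemma st18_insm_tmul (a u v : V) : st18_insm a (u ⊗ₜ[𝔽] v) = u * (a * v) := by
  simp [st18_insm]

noncomputable def st18_Psi (a : V) : (V ⊗[𝔽] V) ⊗[𝔽] V →ₗ[𝔽] V ⊗[𝔽] V :=
  LinearMap.lTensor V (st18_insm a) ∘ₗ (TensorProduct.assoc 𝔽 V V V).toLinearMap

noncomputable def st18_Chi (a : V) : (V ⊗[𝔽] V) ⊗[𝔽] V →ₗ[𝔽] V ⊗[𝔽] V :=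
  LinearMap.rTensor V (st18_insm a)

lemma st18_Psi_tmul (a p q r : V) :
    st18_Psi a ((p ⊗ₜ[𝔽] q) ⊗ₜ[𝔽] r) = p ⊗ₜ[𝔽] (q * (a * r)) := by
  simp [st18_Psi, st18_insm_tmul]

lemma st18_Chi_tmul (a p q r : V) :
    st18_Chi a ((p ⊗ₜ[𝔽] q) ⊗ₜ[𝔽] r) = (p * (a * q)) ⊗ₜ[𝔽] r := by
  simp [st18_Chi, st18_insm_tmul]

lemma st18_Psi_tmul' (a : V) (s : V ⊗[𝔽] V) (r : V) :
    st18_Psi a (s ⊗ₜ[𝔽] r) = ract2 𝔽 V (a * r) s := by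
  induction s with
  | zero => simp only [TensorProduct.zero_tmul, map_zero]
  | add p q hp hq => simp only [TensorProduct.add_tmul, map_add, hp, hq]
  | tmul p q => rw [st18_Psi_tmul, st18_ract2_tmul]

lemma st18_Chi_tmul' (a : V) (s : V ⊗[𝔽] V) (r : V) :
    st18_Chi a (s ⊗ₜ[𝔽] r) = (st18_insm a s) ⊗ₜ[𝔽] r := by
  rw [st18_Chi, LinearMap.rTensor_tmul]

lemma st18_Chi_assoc (a u : V) (s : V ⊗[𝔽] V) :
    st18_Chi a ((TensorProduct.assoc 𝔽 V V V).symm (u ⊗ₜ[𝔽] s)) =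
      lact2 𝔽 V u (lact2 𝔽 V a s) := by
  induction s with
  | zero => simp only [TensorProduct.tmul_zero, LinearEquiv.map_zero, map_zero]
  | add p q hp hq => simp only [TensorProduct.tmul_add, map_add, hp, hq]
  | tmul p q => rw [TensorProduct.assoc_symm_tmul, st18_Chi_tmul, st18_lact2_tmul,
      st18_lact2_tmul]

lemma st18_Psi_assoc (a u : V) (s : V ⊗[𝔽] V) :
    st18_Psi a ((TensorProduct.assoc 𝔽 V V V).symm (u ⊗ₜ[𝔽] s)) =
      u ⊗ₜ[𝔽] (st18_insm a s) := by
  induction s with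
  | zero => simp only [TensorProduct.tmul_zero, LinearEquiv.map_zero, map_zero]
  | add p q hp hq => simp only [TensorProduct.tmul_add, map_add, hp, hq]
  | tmul p q => rw [TensorProduct.assoc_symm_tmul, st18_Psi_tmul, st18_insm_tmul]

/-- `σ ∘ Χ_a ∘ τ = Ψ_a ∘ τ²`. -/
lemma st18_J1 (a : V) (t : (V ⊗[𝔽] V) ⊗[𝔽] V) :
    swap2 𝔽 V (st18_Chi a (sigma3 𝔽 V t)) = st18_Psi a (sigma3 𝔽 V (sigma3 𝔽 V t)) := by
  induction t with
  | zero => simp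
  | add x y hx hy => simp only [map_add, hx, hy]
  | tmul x r =>
    induction x with
    | zero => simp only [TensorProduct.zero_tmul, map_zero]
    | add p q hp hq => simp only [TensorProduct.add_tmul, map_add, hp, hq]
    | tmul p q => rw [st18_sigma3_tmul, st18_sigma3_tmul, st18_Chi_tmul, st18_Psi_tmul,
        TensorProduct.comm_tmul]

/-- `σ ∘ Ψ_a ∘ τ² = Χ_a ∘ τ`. -/
lemma st18_J2 (a : V) (t : (V ⊗[𝔽] V) ⊗[𝔽] V) :
    swap2 𝔽 V (st18_Psi a (sigma3 𝔽 V (sigma3 𝔽 V t))) = st18_Chi a (sigma3 𝔽 V t) := by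
  induction t with
  | zero => simp
  | add x y hx hy => simp only [map_add, hx, hy]
  | tmul x r =>
    induction x with
    | zero => simp only [TensorProduct.zero_tmul, map_zero]
    | add p q hp hq => simp only [TensorProduct.add_tmul, map_add, hp, hq]
    | tmul p q => rw [st18_sigma3_tmul, st18_sigma3_tmul, st18_Chi_tmul, st18_Psi_tmul,
        TensorProduct.comm_tmul]

lemma st18_swap_rl (M : V →ₗ[𝔽] V) (t : V ⊗[𝔽] V) :
    swap2 𝔽 V ((LinearMap.rTensor V M + LinearMap.lTensor V M) t) =
      (LinearMap.rTensor V M + LinearMap.lTensor V M) (swap2 𝔽 V t) := by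
  induction t with
  | zero => simp
  | add x y hx hy => simp only [map_add, hx, hy]
  | tmul u v =>
    simp only [LinearMap.add_apply, LinearMap.rTensor_tmul,
      LinearMap.lTensor_tmul, TensorProduct.comm_tmul, map_add]
    abel

end Aux18C

section Aux18D

set_option synthInstance.maxHeartbeats 1000000
set_option maxHeartbeats 1000000

variable {𝔽 : Type} [Field 𝔽] {V : Type} [Ring V] [Algebra 𝔽 V]

lemma st18_insm_ract (a b : V) (s : V ⊗[𝔽] V) :
    st18_insm a (ract2 𝔽 V b s) = st18_insm a s * b := by
  induction s with
  | zero => simp only [map_zero, zero_mul]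
  | add p q hp hq => simp only [map_add, hp, hq, add_mul]
  | tmul u v => rw [st18_ract2_tmul, st18_insm_tmul, st18_insm_tmul, mul_assoc, mul_assoc]

lemma st18_insm_lact (a c : V) (s : V ⊗[𝔽] V) :
    st18_insm a (lact2 𝔽 V c s) = c * st18_insm a s := by
  induction s with
  | zero => simp only [map_zero, mul_zero]
  | add p q hp hq => simp only [map_add, hp, hq, mul_add]
  | tmul u v => rw [st18_lact2_tmul, st18_insm_tmul, st18_insm_tmul, mul_assoc]

end Aux18D

section Aux18E

set_option synthInstance.maxHeartbeats 1000000
set_option maxHeartbeats 1000000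

variable {𝔽 : Type} [Field 𝔽] {ℓ : ℕ}
variable (D : Fin ℓ → (FreeAlgebra 𝔽 (Fin ℓ) →ₗ[𝔽]
  FreeAlgebra 𝔽 (Fin ℓ) ⊗[𝔽] FreeAlgebra 𝔽 (Fin ℓ)))

/-- The Leibniz rule for the insertion operators. -/
lemma st18_L2 (hD : ∀ i, Is2Deriv (D i))
    (hgen : ∀ i k, D i (FreeAlgebra.ι 𝔽 k) =
      if i = k then (1 : FreeAlgebra 𝔽 (Fin ℓ)) ⊗ₜ[𝔽] (1 : FreeAlgebra 𝔽 (Fin ℓ)) else 0)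
    (i k : Fin ℓ) (t : FreeAlgebra 𝔽 (Fin ℓ) ⊗[𝔽] FreeAlgebra 𝔽 (Fin ℓ)) :
    D i (st18_insm (FreeAlgebra.ι 𝔽 k) t) =
      st18_Psi (FreeAlgebra.ι 𝔽 k) (LinearMap.rTensor (FreeAlgebra 𝔽 (Fin ℓ)) (D i) t)
      + (if i = k then t else 0)
      + st18_Chi (FreeAlgebra.ι 𝔽 k) (st18_dR (D i) t) := by
  by_cases h : i = k
  · subst h
    rw [if_pos rfl]
    induction t with
    | zero => simp
    | add u v hu hv =>
      simp only [map_add, hu, hv]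
      abel
    | tmul u v =>
      rw [st18_insm_tmul, hD i u (FreeAlgebra.ι 𝔽 i * v), hD i (FreeAlgebra.ι 𝔽 i) v,
        hgen i i, if_pos rfl, map_add, LinearMap.rTensor_tmul, st18_Psi_tmul',
        st18_dR_apply, LinearMap.lTensor_tmul, st18_Chi_assoc, st18_ract2_tmul,
        st18_lact2_tmul, one_mul, mul_one]
      abel
  · simp only [if_neg h, add_zero]
    induction t with
    | zero => simp
    | add u v hu hv =>
      simp only [map_add, hu, hv]
      abel
    | tmul u v =>
      rw [st18_insm_tmul, hD i u (FreeAlgebra.ι 𝔽 k * v), hD i (FreeAlgebra.ι 𝔽 k) v,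
        hgen i k, if_neg h, (ract2 𝔽 (FreeAlgebra 𝔽 (Fin ℓ)) v).map_zero, zero_add,
        LinearMap.rTensor_tmul, st18_Psi_tmul', st18_dR_apply, LinearMap.lTensor_tmul,
        st18_Chi_assoc]

/-- The Euler operator on the free algebra. -/
noncomputable def st18_N : FreeAlgebra 𝔽 (Fin ℓ) →ₗ[𝔽] FreeAlgebra 𝔽 (Fin ℓ) :=
  ∑ k, st18_insm (FreeAlgebra.ι 𝔽 k) ∘ₗ D k

lemma st18_N_apply (f : FreeAlgebra 𝔽 (Fin ℓ)) :
    st18_N D f = ∑ k, st18_insm (FreeAlgebra.ι 𝔽 k) (D k f) := by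
  simp [st18_N]

lemma st18_N_mul (hD : ∀ i, Is2Deriv (D i)) (a b : FreeAlgebra 𝔽 (Fin ℓ)) :
    st18_N D (a * b) = st18_N D a * b + a * st18_N D b := by
  rw [st18_N_apply, st18_N_apply, st18_N_apply]
  rw [Finset.sum_congr rfl (fun k _ => by
    rw [hD k a b, map_add, st18_insm_ract, st18_insm_lact])]
  rw [Finset.sum_add_distrib, ← Finset.sum_mul, ← Finset.mul_sum]

lemma st18_N_one (hD : ∀ i, Is2Deriv (D i)) : st18_N D 1 = 0 := by
  rw [st18_N_apply]
  refine Finset.sum_eq_zero fun k _ => ?_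
  rw [st18_deriv_one (hD k), map_zero]

lemma st18_N_algebraMap (hD : ∀ i, Is2Deriv (D i)) (r : 𝔽) :
    st18_N D (algebraMap 𝔽 (FreeAlgebra 𝔽 (Fin ℓ)) r) = 0 := by
  rw [Algebra.algebraMap_eq_smul_one, map_smul, st18_N_one D hD, smul_zero]

lemma st18_N_gen
    (hgen : ∀ i k, D i (FreeAlgebra.ι 𝔽 k) =
      if i = k then (1 : FreeAlgebra 𝔽 (Fin ℓ)) ⊗ₜ[𝔽] (1 : FreeAlgebra 𝔽 (Fin ℓ)) else 0)
    (k : Fin ℓ) : st18_N D (FreeAlgebra.ι 𝔽 k) = FreeAlgebra.ι 𝔽 k := by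
  rw [st18_N_apply]
  have h1 : ∀ i : Fin ℓ, st18_insm (FreeAlgebra.ι 𝔽 i) (D i (FreeAlgebra.ι 𝔽 k)) =
      if i = k then FreeAlgebra.ι 𝔽 k else 0 := by
    intro i
    rw [hgen i k]
    by_cases h : i = k
    · subst h
      rw [if_pos rfl, if_pos rfl, st18_insm_tmul, one_mul, mul_one]
    · rw [if_neg h, if_neg h, map_zero]
  rw [Finset.sum_congr rfl fun i _ => h1 i]
  simp

end Aux18E

section Aux18F

set_option synthInstance.maxHeartbeats 1000000
set_option maxHeartbeats 1000000

variable {𝔽 : Type} [Field 𝔽] {ℓ : ℕ}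
variable (D : Fin ℓ → (FreeAlgebra 𝔽 (Fin ℓ) →ₗ[𝔽]
  FreeAlgebra 𝔽 (Fin ℓ) ⊗[𝔽] FreeAlgebra 𝔽 (Fin ℓ)))

/-- The Euler operator on the 2-fold tensor product. -/
noncomputable def st18_E : FreeAlgebra 𝔽 (Fin ℓ) ⊗[𝔽] FreeAlgebra 𝔽 (Fin ℓ) →ₗ[𝔽]
    FreeAlgebra 𝔽 (Fin ℓ) ⊗[𝔽] FreeAlgebra 𝔽 (Fin ℓ) :=
  LinearMap.rTensor (FreeAlgebra 𝔽 (Fin ℓ)) (st18_N D)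
    + LinearMap.lTensor (FreeAlgebra 𝔽 (Fin ℓ)) (st18_N D)

lemma st18_E_tmul (u v : FreeAlgebra 𝔽 (Fin ℓ)) :
    st18_E D (u ⊗ₜ[𝔽] v) = st18_N D u ⊗ₜ[𝔽] v + u ⊗ₜ[𝔽] st18_N D v := by
  simp [st18_E]

/-- The Euler identity: summing the two closedness-substituted terms gives `E`. -/
lemma st18_L3 (t : FreeAlgebra 𝔽 (Fin ℓ) ⊗[𝔽] FreeAlgebra 𝔽 (Fin ℓ)) :
    (∑ k, st18_Psi (FreeAlgebra.ι 𝔽 k) (st18_dR (D k) t))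
      + (∑ k, st18_Chi (FreeAlgebra.ι 𝔽 k)
          (LinearMap.rTensor (FreeAlgebra 𝔽 (Fin ℓ)) (D k) t)) = st18_E D t := by
  induction t with
  | zero => simp
  | add u v hu hv =>
    simp only [map_add, Finset.sum_add_distrib]
    rw [add_add_add_comm, hu, hv]
  | tmul u v =>
    simp only [st18_dR_apply, LinearMap.lTensor_tmul, st18_Psi_assoc,
      LinearMap.rTensor_tmul, st18_Chi_tmul', st18_E_tmul]
    rw [← TensorProduct.tmul_sum, ← TensorProduct.sum_tmul, ← st18_N_apply, ← st18_N_apply,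
      add_comm]

lemma st18_E1 (hD : ∀ i, Is2Deriv (D i)) (b : FreeAlgebra 𝔽 (Fin ℓ))
    (t : FreeAlgebra 𝔽 (Fin ℓ) ⊗[𝔽] FreeAlgebra 𝔽 (Fin ℓ)) :
    st18_E D (ract2 𝔽 (FreeAlgebra 𝔽 (Fin ℓ)) b t)
      = ract2 𝔽 (FreeAlgebra 𝔽 (Fin ℓ)) b (st18_E D t)
        + ract2 𝔽 (FreeAlgebra 𝔽 (Fin ℓ)) (st18_N D b) t := by
  induction t with
  | zero => simp
  | add u v hu hv =>
    simp only [map_add, hu, hv]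
    abel
  | tmul u v =>
    rw [st18_ract2_tmul, st18_E_tmul, st18_N_mul D hD, st18_E_tmul, map_add,
      st18_ract2_tmul, st18_ract2_tmul, st18_ract2_tmul, TensorProduct.tmul_add]
    abel

lemma st18_E2 (hD : ∀ i, Is2Deriv (D i)) (a : FreeAlgebra 𝔽 (Fin ℓ))
    (t : FreeAlgebra 𝔽 (Fin ℓ) ⊗[𝔽] FreeAlgebra 𝔽 (Fin ℓ)) :
    st18_E D (lact2 𝔽 (FreeAlgebra 𝔽 (Fin ℓ)) a t)
      = lact2 𝔽 (FreeAlgebra 𝔽 (Fin ℓ)) a (st18_E D t)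
        + lact2 𝔽 (FreeAlgebra 𝔽 (Fin ℓ)) (st18_N D a) t := by
  induction t with
  | zero => simp
  | add u v hu hv =>
    simp only [map_add, hu, hv]
    abel
  | tmul u v =>
    rw [st18_lact2_tmul, st18_E_tmul, st18_N_mul D hD, st18_E_tmul, map_add,
      st18_lact2_tmul, st18_lact2_tmul, st18_lact2_tmul, TensorProduct.add_tmul]
    abel

/-- The degree-counting commutation `E ∘ Dᵢ + Dᵢ = Dᵢ ∘ N`. -/
lemma st18_ED (hD : ∀ i, Is2Deriv (D i))
    (hgen : ∀ i k, D i (FreeAlgebra.ι 𝔽 k) =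
      if i = k then (1 : FreeAlgebra 𝔽 (Fin ℓ)) ⊗ₜ[𝔽] (1 : FreeAlgebra 𝔽 (Fin ℓ)) else 0)
    (i : Fin ℓ) (f : FreeAlgebra 𝔽 (Fin ℓ)) :
    st18_E D (D i f) + D i f = D i (st18_N D f) := by
  induction f using FreeAlgebra.induction with
  | grade0 r =>
    rw [st18_deriv_algebraMap (hD i), st18_N_algebraMap D hD, map_zero, map_zero, add_zero]
  | grade1 k =>
    rw [st18_N_gen D hgen, hgen i k]
    split_ifs with h
    · rw [st18_E_tmul, st18_N_one D hD, TensorProduct.zero_tmul, TensorProduct.tmul_zero,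
        add_zero, zero_add]
    · rw [map_zero, add_zero]
  | mul a b ha hb =>
    rw [hD i a b, map_add, st18_E1 D hD, st18_E2 D hD, st18_N_mul D hD, map_add,
      hD i (st18_N D a) b, hD i a (st18_N D b), ← ha, ← hb]
    simp only [map_add]
    abel
  | add a b ha hb =>
    simp only [map_add]
    rw [← ha, ← hb]
    abel

end Aux18F

section Aux18G

set_option synthInstance.maxHeartbeats 1000000
set_option maxHeartbeats 1000000

variable {𝔽 : Type} [Field 𝔽] {ℓ : ℕ}

/-- The word basis of the free algebra. -/
noncomputable def st18_B : Module.Basis (FreeMonoid (Fin ℓ)) 𝔽 (FreeAlgebra 𝔽 (Fin ℓ)) :=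
  FreeAlgebra.basisFreeMonoid 𝔽 (Fin ℓ)

lemma st18_B_apply (w : FreeMonoid (Fin ℓ)) :
    (st18_B w : FreeAlgebra 𝔽 (Fin ℓ)) =
      (FreeAlgebra.equivMonoidAlgebraFreeMonoid (R := 𝔽) (X := Fin ℓ)).symm
        (MonoidAlgebra.single w (1 : 𝔽)) := by
  rw [st18_B, FreeAlgebra.basisFreeMonoid, Module.Basis.map_apply,
    show (Finsupp.basisSingleOne : Module.Basis (FreeMonoid (Fin ℓ)) 𝔽 _) w = Finsupp.single w 1 from
      congrFun Finsupp.coe_basisSingleOne w]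
  rfl

lemma st18_B_one : (st18_B (1 : FreeMonoid (Fin ℓ)) : FreeAlgebra 𝔽 (Fin ℓ)) = 1 := by
  rw [st18_B_apply, ← MonoidAlgebra.one_def, map_one]

lemma st18_B_of_mul (a : Fin ℓ) (w : FreeMonoid (Fin ℓ)) :
    (st18_B (FreeMonoid.of a * w) : FreeAlgebra 𝔽 (Fin ℓ)) =
      FreeAlgebra.ι 𝔽 a * st18_B w := by
  rw [st18_B_apply, st18_B_apply]
  have h1 : (MonoidAlgebra.single (FreeMonoid.of a * w) (1 : 𝔽) :
        MonoidAlgebra 𝔽 (FreeMonoid (Fin ℓ))) =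
      MonoidAlgebra.single (FreeMonoid.of a) (1 : 𝔽) * MonoidAlgebra.single w 1 := by
    rw [MonoidAlgebra.single_mul_single, one_mul]
  rw [h1, map_mul]
  congr 1
  have h2 : FreeAlgebra.equivMonoidAlgebraFreeMonoid (FreeAlgebra.ι 𝔽 a) =
      (MonoidAlgebra.single (FreeMonoid.of a) (1 : 𝔽) :
        MonoidAlgebra 𝔽 (FreeMonoid (Fin ℓ))) := by
    simp [FreeAlgebra.equivMonoidAlgebraFreeMonoid, MonoidAlgebra.of_apply]
  rw [← h2, AlgEquiv.symm_apply_apply]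

variable (D : Fin ℓ → (FreeAlgebra 𝔽 (Fin ℓ) →ₗ[𝔽]
  FreeAlgebra 𝔽 (Fin ℓ) ⊗[𝔽] FreeAlgebra 𝔽 (Fin ℓ)))

lemma st18_N_basis (hD : ∀ i, Is2Deriv (D i))
    (hgen : ∀ i k, D i (FreeAlgebra.ι 𝔽 k) =
      if i = k then (1 : FreeAlgebra 𝔽 (Fin ℓ)) ⊗ₜ[𝔽] (1 : FreeAlgebra 𝔽 (Fin ℓ)) else 0)
    (w : FreeMonoid (Fin ℓ)) :
    st18_N D (st18_B w) = (w.length : 𝔽) • st18_B w := by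
  induction w using FreeMonoid.recOn with
  | one => rw [st18_B_one, st18_N_one D hD, FreeMonoid.length_one, Nat.cast_zero, zero_smul]
  | of_mul a y hy =>
    rw [st18_B_of_mul, st18_N_mul D hD, st18_N_gen D hgen, hy, mul_smul_comm,
      FreeMonoid.length_mul, FreeMonoid.length_of, Nat.cast_add, Nat.cast_one, add_smul,
      one_smul]

/-- Basis of the 2-fold tensor product. -/
noncomputable def st18_B2 : Module.Basis (FreeMonoid (Fin ℓ) × FreeMonoid (Fin ℓ)) 𝔽
    (FreeAlgebra 𝔽 (Fin ℓ) ⊗[𝔽] FreeAlgebra 𝔽 (Fin ℓ)) :=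
  Module.Basis.tensorProduct st18_B st18_B

/-- Scaling a word of length `m` by `(m+1)⁻¹`. -/
noncomputable def st18_S1op : FreeAlgebra 𝔽 (Fin ℓ) →ₗ[𝔽] FreeAlgebra 𝔽 (Fin ℓ) :=
  st18_B.constr 𝔽 (fun w => ((w.length : 𝔽) + 1)⁻¹ • st18_B w)

/-- Scaling a bidegree-`m` tensor by `(m+2)⁻¹`. -/
noncomputable def st18_S2op : FreeAlgebra 𝔽 (Fin ℓ) ⊗[𝔽] FreeAlgebra 𝔽 (Fin ℓ) →ₗ[𝔽]
    FreeAlgebra 𝔽 (Fin ℓ) ⊗[𝔽] FreeAlgebra 𝔽 (Fin ℓ) :=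
  st18_B2.constr 𝔽 (fun p => (((p.1.length + p.2.length : ℕ) : 𝔽) + 2)⁻¹ • st18_B2 p)

lemma st18_S1op_basis (w : FreeMonoid (Fin ℓ)) :
    (st18_S1op (st18_B w) : FreeAlgebra 𝔽 (Fin ℓ)) = ((w.length : 𝔽) + 1)⁻¹ • st18_B w :=
  Module.Basis.constr_basis _ _ _ _

lemma st18_S2op_basis (w₁ w₂ : FreeMonoid (Fin ℓ)) :
    (st18_S2op (st18_B2 (w₁, w₂)) : FreeAlgebra 𝔽 (Fin ℓ) ⊗[𝔽] FreeAlgebra 𝔽 (Fin ℓ)) =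
      (((w₁.length + w₂.length : ℕ) : 𝔽) + 2)⁻¹ • st18_B2 (w₁, w₂) :=
  Module.Basis.constr_basis _ _ _ _

lemma st18_E_basis (hD : ∀ i, Is2Deriv (D i))
    (hgen : ∀ i k, D i (FreeAlgebra.ι 𝔽 k) =
      if i = k then (1 : FreeAlgebra 𝔽 (Fin ℓ)) ⊗ₜ[𝔽] (1 : FreeAlgebra 𝔽 (Fin ℓ)) else 0)
    (w₁ w₂ : FreeMonoid (Fin ℓ)) :
    st18_E D (st18_B2 (w₁, w₂)) = ((w₁.length + w₂.length : ℕ) : 𝔽) • st18_B2 (w₁, w₂) := by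
  rw [st18_B2, Module.Basis.tensorProduct_apply, st18_E_tmul, st18_N_basis D hD hgen,
    st18_N_basis D hD hgen, TensorProduct.tmul_smul, ← TensorProduct.smul_tmul', ← add_smul,
    Nat.cast_add]

variable [CharZero 𝔽]

lemma st18_Einv (hD : ∀ i, Is2Deriv (D i))
    (hgen : ∀ i k, D i (FreeAlgebra.ι 𝔽 k) =
      if i = k then (1 : FreeAlgebra 𝔽 (Fin ℓ)) ⊗ₜ[𝔽] (1 : FreeAlgebra 𝔽 (Fin ℓ)) else 0)
    (t : FreeAlgebra 𝔽 (Fin ℓ) ⊗[𝔽] FreeAlgebra 𝔽 (Fin ℓ)) :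
    st18_S2op (st18_E D t) + (2 : 𝔽) • st18_S2op t = t := by
  have h : (st18_S2op ∘ₗ st18_E D + (2 : 𝔽) • st18_S2op :
      FreeAlgebra 𝔽 (Fin ℓ) ⊗[𝔽] FreeAlgebra 𝔽 (Fin ℓ) →ₗ[𝔽] _) = LinearMap.id := by
    refine st18_B2.ext fun p => ?_
    obtain ⟨w₁, w₂⟩ := p
    have hne : ((w₁.length + w₂.length : ℕ) : 𝔽) + 2 ≠ 0 := by
      have h0 : (((w₁.length + w₂.length + 2 : ℕ)) : 𝔽) ≠ 0 :=
        Nat.cast_ne_zero.mpr (by omega)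
      push_cast at h0 ⊢
      exact h0
    have hc : ((w₁.length + w₂.length : ℕ) : 𝔽)
          * (((w₁.length + w₂.length : ℕ) : 𝔽) + 2)⁻¹
        + (2 : 𝔽) * (((w₁.length + w₂.length : ℕ) : 𝔽) + 2)⁻¹ = 1 := by
      rw [← add_mul, mul_inv_cancel₀ hne]
    rw [LinearMap.add_apply, LinearMap.comp_apply, LinearMap.smul_apply,
      st18_E_basis D hD hgen, map_smul, st18_S2op_basis, smul_smul, smul_smul, ← add_smul,
      LinearMap.id_apply, hc, one_smul]
  have := LinearMap.congr_fun h t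
  simpa using this

lemma st18_CS (hD : ∀ i, Is2Deriv (D i))
    (hgen : ∀ i k, D i (FreeAlgebra.ι 𝔽 k) =
      if i = k then (1 : FreeAlgebra 𝔽 (Fin ℓ)) ⊗ₜ[𝔽] (1 : FreeAlgebra 𝔽 (Fin ℓ)) else 0)
    (i : Fin ℓ) (f : FreeAlgebra 𝔽 (Fin ℓ)) :
    D i (st18_S1op f) = st18_S2op (D i f) := by
  have h : (D i ∘ₗ st18_S1op : FreeAlgebra 𝔽 (Fin ℓ) →ₗ[𝔽] _) = st18_S2op ∘ₗ D i := by
    refine st18_B.ext fun w => ?_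
    rw [LinearMap.comp_apply, LinearMap.comp_apply, st18_S1op_basis, map_smul]
    set t := D i (st18_B w) with ht
    have hE : st18_E D t = (w.length : 𝔽) • t - t := by
      rw [eq_sub_iff_add_eq]
      have h1 := st18_ED D hD hgen i (st18_B w)
      rw [st18_N_basis D hD hgen, map_smul] at h1
      exact h1
    have h2 := st18_Einv D hD hgen t
    rw [hE, map_sub, map_smul] at h2
    have hm : (↑w.length : 𝔽) • st18_S2op t - st18_S2op t + (2 : 𝔽) • st18_S2op t
        = ((↑w.length : 𝔽) + 1) • st18_S2op t := by module
    rw [hm] at h2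
    have hne : ((w.length : 𝔽) + 1) ≠ 0 := by
      have h0 : (((w.length + 1 : ℕ)) : 𝔽) ≠ 0 := Nat.cast_ne_zero.mpr (by omega)
      push_cast at h0
      exact h0
    have h4 : st18_S2op t = ((↑w.length : 𝔽) + 1)⁻¹ • t := by
      conv_rhs => rw [← h2]
      rw [smul_smul, inv_mul_cancel₀ hne, one_smul]
    rw [h4]
  exact LinearMap.congr_fun h f

lemma st18_S2_swap (t : FreeAlgebra 𝔽 (Fin ℓ) ⊗[𝔽] FreeAlgebra 𝔽 (Fin ℓ)) :
    st18_S2op (swap2 𝔽 (FreeAlgebra 𝔽 (Fin ℓ)) t)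
      = swap2 𝔽 (FreeAlgebra 𝔽 (Fin ℓ)) (st18_S2op t) := by
  have hsw : ∀ a b : FreeMonoid (Fin ℓ),
      (swap2 𝔽 (FreeAlgebra 𝔽 (Fin ℓ))) (st18_B2 (a, b)) = st18_B2 (b, a) := by
    intro a b
    rw [st18_B2, Module.Basis.tensorProduct_apply, Module.Basis.tensorProduct_apply]
    exact TensorProduct.comm_tmul _ _ _ _ _
  have h : (st18_S2op ∘ₗ (swap2 𝔽 (FreeAlgebra 𝔽 (Fin ℓ))).toLinearMap :
        FreeAlgebra 𝔽 (Fin ℓ) ⊗[𝔽] FreeAlgebra 𝔽 (Fin ℓ) →ₗ[𝔽] _)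
      = (swap2 𝔽 (FreeAlgebra 𝔽 (Fin ℓ))).toLinearMap ∘ₗ st18_S2op := by
    refine st18_B2.ext fun p => ?_
    obtain ⟨w₁, w₂⟩ := p
    simp only [LinearMap.comp_apply, LinearEquiv.coe_coe]
    rw [hsw, st18_S2op_basis w₂ w₁, st18_S2op_basis w₁ w₂, map_smul, hsw,
      show ((w₂.length + w₁.length : ℕ) : 𝔽) = ((w₁.length + w₂.length : ℕ) : 𝔽) by
        rw [Nat.add_comm]]
  exact LinearMap.congr_fun h t

end Aux18G

section Aux18H

set_option synthInstance.maxHeartbeats 1000000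
set_option maxHeartbeats 1000000

variable {𝔽 : Type} [Field 𝔽] {V : Type} [Ring V] [Algebra 𝔽 V]

lemma st18_swap2_swap2 (t : V ⊗[𝔽] V) : swap2 𝔽 V (swap2 𝔽 V t) = t := by
  induction t with
  | zero => simp
  | add a b ha hb => simp only [map_add, ha, hb]
  | tmul u v => rw [TensorProduct.comm_tmul, TensorProduct.comm_tmul]

end Aux18H


set_option synthInstance.maxHeartbeats 1000000 in
set_option maxHeartbeats 2000000 in
/-- on the free algebra `R_ℓ`, a 2-form `A` (i.e. `A_{ij} = −(A_{ji})^σ`)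
is closed, i.e.
`(∂/∂x_i)_L A_{jk} − (∂/∂x_j)_R A_{ik} + ((∂/∂x_k)_L A_{ij})^{σ²} = 0` for all `i,j,k`,
iff there is `F` with `A_{ij} = (1/2)(∂F_j/∂x_i − (∂F_i/∂x_j)^σ)`. -/
theorem statement_18 (𝔽 : Type) [Field 𝔽] [CharZero 𝔽] (ℓ : ℕ)
    (D : Fin ℓ → (FreeAlgebra 𝔽 (Fin ℓ) →ₗ[𝔽] FreeAlgebra 𝔽 (Fin ℓ) ⊗[𝔽] FreeAlgebra 𝔽 (Fin ℓ)))
    (hD : ∀ i, Is2Deriv (D i))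
    (hgen : ∀ i k, D i (FreeAlgebra.ι 𝔽 k) =
      if i = k then (1 : FreeAlgebra 𝔽 (Fin ℓ)) ⊗ₜ[𝔽] (1 : FreeAlgebra 𝔽 (Fin ℓ)) else 0)
    (A : Fin ℓ → Fin ℓ → FreeAlgebra 𝔽 (Fin ℓ) ⊗[𝔽] FreeAlgebra 𝔽 (Fin ℓ))
    (hA : ∀ i j, A i j = - swap2 𝔽 (FreeAlgebra 𝔽 (Fin ℓ)) (A j i)) :
    (∀ i j k,
        LinearMap.rTensor (FreeAlgebra 𝔽 (Fin ℓ)) (D i) (A j k)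
        - (TensorProduct.assoc 𝔽 (FreeAlgebra 𝔽 (Fin ℓ)) (FreeAlgebra 𝔽 (Fin ℓ))
            (FreeAlgebra 𝔽 (Fin ℓ))).symm
            (LinearMap.lTensor (FreeAlgebra 𝔽 (Fin ℓ)) (D j) (A i k))
        + sigma3 𝔽 (FreeAlgebra 𝔽 (Fin ℓ)) (sigma3 𝔽 (FreeAlgebra 𝔽 (Fin ℓ))
            (LinearMap.rTensor (FreeAlgebra 𝔽 (Fin ℓ)) (D k) (A i j))) = 0)
      ↔ ∃ F : Fin ℓ → FreeAlgebra 𝔽 (Fin ℓ), ∀ i j,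
          A i j = ((2 : 𝔽)⁻¹) •
            (D i (F j) - swap2 𝔽 (FreeAlgebra 𝔽 (Fin ℓ)) (D j (F i))) := by

  have h2ne : (2 : 𝔽) ≠ 0 := by norm_num
  constructor
  · -- closed ⇒ exact
    intro hC
    refine ⟨fun j => (2 : 𝔽) • st18_S1op (∑ k, st18_insm (FreeAlgebra.ι 𝔽 k) (A k j)),
      fun i j => ?_⟩
    have hexp : ∀ a b : Fin ℓ,
        D a (∑ k, st18_insm (FreeAlgebra.ι 𝔽 k) (A k b))
          = A a b
            + (∑ k, st18_Psi (FreeAlgebra.ι 𝔽 k)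
                (LinearMap.rTensor (FreeAlgebra 𝔽 (Fin ℓ)) (D a) (A k b)))
            + (∑ k, st18_Chi (FreeAlgebra.ι 𝔽 k) (st18_dR (D a) (A k b))) := by
      intro a b
      rw [map_sum, Finset.sum_congr rfl fun k _ => st18_L2 D hD hgen a k (A k b),
        Finset.sum_add_distrib, Finset.sum_add_distrib, Finset.sum_ite_eq,
        if_pos (Finset.mem_univ a)]
      abel
    have hstar : D i (∑ k, st18_insm (FreeAlgebra.ι 𝔽 k) (A k j))
        - swap2 𝔽 (FreeAlgebra 𝔽 (Fin ℓ))
            (D j (∑ k, st18_insm (FreeAlgebra.ι 𝔽 k) (A k i)))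
        = st18_E D (A i j) + (2 : 𝔽) • A i j := by
      have hAS1 : ∀ k : Fin ℓ, sigma3 𝔽 (FreeAlgebra 𝔽 (Fin ℓ))
            (sigma3 𝔽 (FreeAlgebra 𝔽 (Fin ℓ))
              (LinearMap.rTensor (FreeAlgebra 𝔽 (Fin ℓ)) (D j) (A k i)))
          = - (sigma3 𝔽 (FreeAlgebra 𝔽 (Fin ℓ)) (st18_dR (D j) (A i k))) := by
        intro k
        rw [hA k i, map_neg, st18_S1, map_neg, map_neg,
          st18_tau3 (sigma3 𝔽 (FreeAlgebra 𝔽 (Fin ℓ)) (st18_dR (D j) (A i k)))]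
      have hDL : ∀ k : Fin ℓ, LinearMap.rTensor (FreeAlgebra 𝔽 (Fin ℓ)) (D i) (A k j)
          = st18_dR (D k) (A i j)
            - sigma3 𝔽 (FreeAlgebra 𝔽 (Fin ℓ)) (sigma3 𝔽 (FreeAlgebra 𝔽 (Fin ℓ))
                (LinearMap.rTensor (FreeAlgebra 𝔽 (Fin ℓ)) (D j) (A i k))) := by
        intro k
        have h := hC i k j
        rw [st18_dR_apply, ← sub_eq_zero, ← h]
        abel
      have hDR' : ∀ k : Fin ℓ, st18_dR (D i) (A k j)
          = LinearMap.rTensor (FreeAlgebra 𝔽 (Fin ℓ)) (D k) (A i j)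
            - sigma3 𝔽 (FreeAlgebra 𝔽 (Fin ℓ)) (st18_dR (D j) (A i k)) := by
        intro k
        have h := hC k i j
        rw [st18_dR_apply, eq_comm, ← sub_eq_zero, ← h, hAS1 k]
        abel
      have r1 : (∑ k, st18_Psi (FreeAlgebra.ι 𝔽 k)
            (LinearMap.rTensor (FreeAlgebra 𝔽 (Fin ℓ)) (D i) (A k j)))
          = (∑ k, st18_Psi (FreeAlgebra.ι 𝔽 k) (st18_dR (D k) (A i j)))
            - (∑ k, st18_Psi (FreeAlgebra.ι 𝔽 k)
                (sigma3 𝔽 (FreeAlgebra 𝔽 (Fin ℓ)) (sigma3 𝔽 (FreeAlgebra 𝔽 (Fin ℓ))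
                  (LinearMap.rTensor (FreeAlgebra 𝔽 (Fin ℓ)) (D j) (A i k))))) := by
        rw [← Finset.sum_sub_distrib]
        exact Finset.sum_congr rfl fun k _ => by rw [hDL k, map_sub]
      have r2 : (∑ k, st18_Chi (FreeAlgebra.ι 𝔽 k) (st18_dR (D i) (A k j)))
          = (∑ k, st18_Chi (FreeAlgebra.ι 𝔽 k)
              (LinearMap.rTensor (FreeAlgebra 𝔽 (Fin ℓ)) (D k) (A i j)))
            - (∑ k, st18_Chi (FreeAlgebra.ι 𝔽 k)
                (sigma3 𝔽 (FreeAlgebra 𝔽 (Fin ℓ)) (st18_dR (D j) (A i k)))) := by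
        rw [← Finset.sum_sub_distrib]
        exact Finset.sum_congr rfl fun k _ => by rw [hDR' k, map_sub]
      have r3 : (∑ k, st18_Psi (FreeAlgebra.ι 𝔽 k)
            (LinearMap.rTensor (FreeAlgebra 𝔽 (Fin ℓ)) (D j) (A k i)))
          = - ∑ k, st18_Psi (FreeAlgebra.ι 𝔽 k)
              (sigma3 𝔽 (FreeAlgebra 𝔽 (Fin ℓ)) (sigma3 𝔽 (FreeAlgebra 𝔽 (Fin ℓ))
                (st18_dR (D j) (A i k)))) := by
        rw [← Finset.sum_neg_distrib]
        refine Finset.sum_congr rfl fun k _ => ?_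
        rw [hA k i, map_neg, st18_S1, map_neg]
      have r4 : (∑ k, st18_Chi (FreeAlgebra.ι 𝔽 k) (st18_dR (D j) (A k i)))
          = - ∑ k, st18_Chi (FreeAlgebra.ι 𝔽 k)
              (sigma3 𝔽 (FreeAlgebra 𝔽 (Fin ℓ))
                (LinearMap.rTensor (FreeAlgebra 𝔽 (Fin ℓ)) (D j) (A i k))) := by
        rw [← Finset.sum_neg_distrib]
        refine Finset.sum_congr rfl fun k _ => ?_
        rw [hA k i, map_neg, st18_S2, map_neg]
      have e2a : D j (∑ k, st18_insm (FreeAlgebra.ι 𝔽 k) (A k i))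
          = -(swap2 𝔽 (FreeAlgebra 𝔽 (Fin ℓ)) (A i j))
            - (∑ k, st18_Psi (FreeAlgebra.ι 𝔽 k)
                (sigma3 𝔽 (FreeAlgebra 𝔽 (Fin ℓ)) (sigma3 𝔽 (FreeAlgebra 𝔽 (Fin ℓ))
                  (st18_dR (D j) (A i k)))))
            - (∑ k, st18_Chi (FreeAlgebra.ι 𝔽 k)
                (sigma3 𝔽 (FreeAlgebra 𝔽 (Fin ℓ))
                  (LinearMap.rTensor (FreeAlgebra 𝔽 (Fin ℓ)) (D j) (A i k)))) := by
        rw [hexp j i, r3, r4, hA j i]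
        abel
      have e2 : swap2 𝔽 (FreeAlgebra 𝔽 (Fin ℓ))
            (D j (∑ k, st18_insm (FreeAlgebra.ι 𝔽 k) (A k i)))
          = -(A i j)
            - (∑ k, st18_Chi (FreeAlgebra.ι 𝔽 k)
                (sigma3 𝔽 (FreeAlgebra 𝔽 (Fin ℓ)) (st18_dR (D j) (A i k))))
            - (∑ k, st18_Psi (FreeAlgebra.ι 𝔽 k)
                (sigma3 𝔽 (FreeAlgebra 𝔽 (Fin ℓ)) (sigma3 𝔽 (FreeAlgebra 𝔽 (Fin ℓ))
                  (LinearMap.rTensor (FreeAlgebra 𝔽 (Fin ℓ)) (D j) (A i k))))) := by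
        rw [e2a, map_sub, map_sub, map_neg, st18_swap2_swap2, map_sum, map_sum,
          Finset.sum_congr rfl fun k _ =>
            st18_J2 (FreeAlgebra.ι 𝔽 k) (st18_dR (D j) (A i k)),
          Finset.sum_congr rfl fun k _ =>
            st18_J1 (FreeAlgebra.ι 𝔽 k)
              (LinearMap.rTensor (FreeAlgebra 𝔽 (Fin ℓ)) (D j) (A i k))]
      rw [hexp i j, r1, r2, e2, ← st18_L3 D (A i j), two_smul]
      abel
    rw [map_smul, map_smul, st18_CS D hD hgen i, st18_CS D hD hgen j, map_smul,
      ← st18_S2_swap]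
    rw [show ∀ x y : FreeAlgebra 𝔽 (Fin ℓ) ⊗[𝔽] FreeAlgebra 𝔽 (Fin ℓ),
      (2 : 𝔽) • x - (2 : 𝔽) • y = (2 : 𝔽) • (x - y) from fun x y => (smul_sub _ _ _).symm]
    rw [← map_sub, hstar, smul_smul, inv_mul_cancel₀ h2ne,
      one_smul, map_add, map_smul]
    exact (st18_Einv D hD hgen (A i j)).symm
  · -- exact ⇒ closed
    rintro ⟨F, hF⟩ i j k
    have hsc : ∀ (a b : Fin ℓ) (f : FreeAlgebra 𝔽 (Fin ℓ)),
        (TensorProduct.assoc 𝔽 (FreeAlgebra 𝔽 (Fin ℓ)) (FreeAlgebra 𝔽 (Fin ℓ))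
            (FreeAlgebra 𝔽 (Fin ℓ))).symm
          (LinearMap.lTensor (FreeAlgebra 𝔽 (Fin ℓ)) (D b) (D a f))
        = LinearMap.rTensor (FreeAlgebra 𝔽 (Fin ℓ)) (D a) (D b f) := by
      intro a b f
      rw [← st18_dR_apply]
      exact (st18_sc D hD hgen a b f).symm
    have hS1' : ∀ (b : Fin ℓ) (t : FreeAlgebra 𝔽 (Fin ℓ) ⊗[𝔽] FreeAlgebra 𝔽 (Fin ℓ)),
        LinearMap.rTensor (FreeAlgebra 𝔽 (Fin ℓ)) (D b)
            (swap2 𝔽 (FreeAlgebra 𝔽 (Fin ℓ)) t)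
          = sigma3 𝔽 (FreeAlgebra 𝔽 (Fin ℓ)) (sigma3 𝔽 (FreeAlgebra 𝔽 (Fin ℓ))
              ((TensorProduct.assoc 𝔽 (FreeAlgebra 𝔽 (Fin ℓ)) (FreeAlgebra 𝔽 (Fin ℓ))
                  (FreeAlgebra 𝔽 (Fin ℓ))).symm
                (LinearMap.lTensor (FreeAlgebra 𝔽 (Fin ℓ)) (D b) t))) := by
      intro b t
      rw [st18_S1, st18_dR_apply]
    have hS2' : ∀ (b : Fin ℓ) (t : FreeAlgebra 𝔽 (Fin ℓ) ⊗[𝔽] FreeAlgebra 𝔽 (Fin ℓ)),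
        (TensorProduct.assoc 𝔽 (FreeAlgebra 𝔽 (Fin ℓ)) (FreeAlgebra 𝔽 (Fin ℓ))
            (FreeAlgebra 𝔽 (Fin ℓ))).symm
          (LinearMap.lTensor (FreeAlgebra 𝔽 (Fin ℓ)) (D b)
            (swap2 𝔽 (FreeAlgebra 𝔽 (Fin ℓ)) t))
          = sigma3 𝔽 (FreeAlgebra 𝔽 (Fin ℓ))
              (LinearMap.rTensor (FreeAlgebra 𝔽 (Fin ℓ)) (D b) t) := by
      intro b t
      rw [← st18_dR_apply, st18_S2]
    rw [hF j k, hF i k, hF i j]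
    simp only [map_smul, map_sub]
    rw [hsc i j (F k), hS1' i (D k (F j)), hsc k i (F j), hS2' j (D k (F i)),
      hS1' k (D j (F i)), hsc j k (F i),
      st18_tau3 (sigma3 𝔽 (FreeAlgebra 𝔽 (Fin ℓ))
        (LinearMap.rTensor (FreeAlgebra 𝔽 (Fin ℓ)) (D j) (D k (F i))))]
    simp only [smul_sub]
    abel
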